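/- For a finite p-group P, if |P : Φ(P)| = p² and |P'| = p, then P is minimal non-abelian, i.e. P is non-abelian and every proper subgroup of P is abelian. -/

import Mathlib

open Subgroup MulAction
open scoped commutatorElement

/-- A normal subgroup of order `p` in a finite `p`-group is central. -/
lemma aux_normal_card_p_le_center {p : ℕ} [Fact p.Prime] {P : Type*} [Group P] [Finite P]
    (hP : IsPGroup p P) (N : Subgroup P) [N.Normal] (hN : Nat.card N = p) :
    N ≤ Subgroup.center P := by
  have hP' : IsPGroup p (ConjAct P) := hP.of_equiv ConjAct.toConjAct
  have hmod := hP'.card_modEq_card_fixedPoints (α := N)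
  rw [hN] at hmod
  have hdvd : p ∣ Nat.card (fixedPoints (ConjAct P) N) :=
    (Nat.modEq_zero_iff_dvd).mp (hmod.symm.trans (Nat.modEq_zero_iff_dvd.mpr dvd_rfl))
  have hle : (Set.univ : Set N).ncard ≤ (fixedPoints (ConjAct P) N).ncard := by
    have hub : (fixedPoints (ConjAct P) N).ncard ≤ p := by
      calc (fixedPoints (ConjAct P) N).ncard ≤ (Set.univ : Set N).ncard :=
            Set.ncard_le_ncard (Set.subset_univ _) Set.finite_univ
        _ = p := by rw [Set.ncard_univ, hN]
    have hdvd' : p ∣ (fixedPoints (ConjAct P) N).ncard := by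
      rwa [Nat.card_coe_set_eq] at hdvd
    have hpos : 0 < (fixedPoints (ConjAct P) N).ncard := by
      rw [← Nat.card_coe_set_eq]
      have h1 : (1 : N) ∈ fixedPoints (ConjAct P) N := by intro g; simp
      exact Nat.card_pos_iff.mpr ⟨⟨⟨1, h1⟩⟩, Set.Finite.to_subtype (Set.toFinite _)⟩
    have := Nat.le_of_dvd hpos hdvd'
    rw [Set.ncard_univ, hN]
    omega
  have heq : fixedPoints (ConjAct P) N = Set.univ :=
    Set.eq_of_subset_of_ncard_le (Set.subset_univ _) hle (Set.toFinite _)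
  intro n hn
  rw [Subgroup.mem_center_iff]
  intro g
  have hfix : (⟨n, hn⟩ : N) ∈ fixedPoints (ConjAct P) N := heq ▸ Set.mem_univ _
  have h2 : (ConjAct.toConjAct g) • n = n := congrArg Subtype.val (hfix (ConjAct.toConjAct g))
  rw [ConjAct.toConjAct_smul] at h2
  exact mul_inv_eq_iff_eq_mul.mp h2

theorem stmt3 (p : ℕ) [Fact p.Prime] (P : Type*) [Group P] [Finite P] (hP : IsPGroup p P)
    (hfrat : (frattini P).index = p ^ 2)
    (hcomm : Nat.card (commutator P) = p) :
    (¬ ∀ a b : P, a * b = b * a) ∧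
      ∀ H : Subgroup P, H ≠ ⊤ → ∀ a ∈ H, ∀ b ∈ H, a * b = b * a := by
  have hp : p.Prime := Fact.out
  -- the commutator subgroup is central
  have hcent : commutator P ≤ Subgroup.center P :=
    aux_normal_card_p_le_center hP (commutator P) hcomm
  have hcentEl : ∀ a b : P, ⁅a, b⁆ ∈ Subgroup.center P := fun a b =>
    hcent (Subgroup.commutator_mem_commutator (Subgroup.mem_top a) (Subgroup.mem_top b))
  -- the Frattini subgroup is central
  have hfratZ : frattini P ≤ Subgroup.center P := by
    intro g hg
    rw [Subgroup.mem_center_iff]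
    intro y
    -- the map x ↦ ⁅x, y⁆ is a homomorphism with kernel the centralizer of y
    let f : P →* P :=
      { toFun := fun x => ⁅x, y⁆
        map_one' := by simp
        map_mul' := by
          intro a b
          show ⁅a * b, y⁆ = ⁅a, y⁆ * ⁅b, y⁆
          have key : ∀ c : P, c * ⁅b, y⁆ = ⁅b, y⁆ * c :=
            Subgroup.mem_center_iff.mp (hcentEl b y)
          have key2 : ∀ c : P, c * ⁅a, y⁆ = ⁅a, y⁆ * c :=
            Subgroup.mem_center_iff.mp (hcentEl a y)
          have h1 : ⁅a * b, y⁆ = a * ⁅b, y⁆ * a⁻¹ * ⁅a, y⁆ := by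
            simp only [commutatorElement_def]; group
          have h3 : ⁅b, y⁆ * a * a⁻¹ * ⁅a, y⁆ = ⁅b, y⁆ * ⁅a, y⁆ := by group
          rw [h1, key a, h3, key2 ⁅b, y⁆] }
    have hker : f.ker = Subgroup.centralizer {y} := by
      ext x
      have hfx : f x = ⁅x, y⁆ := rfl
      rw [MonoidHom.mem_ker, hfx, commutatorElement_eq_one_iff_mul_comm,
        Subgroup.mem_centralizer_iff]
      constructor
      · intro hxy h hh
        rw [Set.mem_singleton_iff] at hh
        rw [hh]
        exact hxy.symm
      · intro hc
        exact (hc y (Set.mem_singleton y)).symm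
    have hrange : f.range ≤ commutator P := by
      rintro _ ⟨x, rfl⟩
      exact Subgroup.commutator_mem_commutator (Subgroup.mem_top x) (Subgroup.mem_top y)
    have hidx : (Subgroup.centralizer ({y} : Set P)).index ∣ p := by
      rw [← hker, Subgroup.index_ker]
      calc Nat.card f.range ∣ Nat.card (commutator P) := Subgroup.card_dvd_of_le hrange
        _ = p := hcomm
    have hcy : g ∈ Subgroup.centralizer ({y} : Set P) := by
      rcases hp.eq_one_or_self_of_dvd _ hidx with h1 | hp'
      · have : Subgroup.centralizer ({y} : Set P) = ⊤ := Subgroup.index_eq_one.mp h1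
        rw [this]; trivial
      · have hcoatom : IsCoatom (Subgroup.centralizer ({y} : Set P)) := by
          constructor
          · intro htop
            rw [htop, Subgroup.index_top] at hp'
            exact hp.one_lt.ne hp'
          · intro K hK
            have hle : Subgroup.centralizer ({y} : Set P) ≤ K := hK.le
            have hrel := Subgroup.relIndex_mul_index hle
            rw [hp'] at hrel
            have hrne : (Subgroup.centralizer ({y} : Set P)).relIndex K ≠ 1 := by
              rw [Ne, Subgroup.relIndex_eq_one]
              exact fun h => hK.not_ge h
            rcases hp.eq_one_or_self_of_dvd _ ⟨K.index, hrel.symm⟩ with h | h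
            · exact absurd h hrne
            · rw [h] at hrel
              have : K.index = 1 := mul_left_cancel₀ hp.ne_zero (by rw [mul_one]; exact hrel)
              exact Subgroup.index_eq_one.mp this
        exact frattini_le_coatom hcoatom hg
    exact hcy y (Set.mem_singleton y)
  constructor
  · intro hab
    have hbot : commutator P = ⊥ := by
      apply le_bot_iff.mp
      rw [_root_.commutator_def]
      exact Subgroup.commutator_le.mpr fun g _ h _ => by
        rw [Subgroup.mem_bot, commutatorElement_eq_one_iff_mul_comm]
        exact hab g h
    rw [hbot, Subgroup.card_bot] at hcomm
    exact hp.one_lt.ne hcomm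
  · intro H hH a ha b hb
    set K : Subgroup P := Subgroup.closure {a, b} ⊔ frattini P with hK
    have haK : a ∈ K := Subgroup.mem_sup_left (Subgroup.subset_closure (by simp))
    have hbK : b ∈ K := Subgroup.mem_sup_left (Subgroup.subset_closure (by simp))
    have hKne : K ≠ ⊤ := by
      intro htop
      have hcl : Subgroup.closure {a, b} = ⊤ := frattini_nongenerating htop
      have : H = ⊤ := top_le_iff.mp (hcl ▸ (Subgroup.closure_le H).mpr (by
        rintro x (rfl | rfl) <;> assumption))
      exact hH this
    have hfK : frattini P ≤ K := le_sup_right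
    have hrel := Subgroup.relIndex_mul_index hfK
    rw [hfrat] at hrel
    have hKidx : K.index ≠ 1 := fun h => hKne (Subgroup.index_eq_one.mp h)
    have hrdvd : (frattini P).relIndex K ∣ p ^ 2 := ⟨K.index, hrel.symm⟩
    obtain ⟨m, hm, hrm⟩ := (Nat.dvd_prime_pow hp).mp hrdvd
    have hmlt : m < 2 := by
      by_contra h
      have hm2 : m = 2 := le_antisymm hm (not_lt.mp h)
      subst hm2
      rw [hrm] at hrel
      have hp2 : (p : ℕ) ^ 2 ≠ 0 := pow_ne_zero 2 hp.ne_zero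
      exact hKidx (mul_left_cancel₀ hp2 (by rw [mul_one]; exact hrel))
    have hcard : Nat.card (K ⧸ (frattini P).subgroupOf K) = p ^ m := by
      rw [← hrm]; rfl
    have hcyc : IsCyclic (K ⧸ (frattini P).subgroupOf K) := by
      interval_cases m
      · have h1 : Nat.card (K ⧸ (frattini P).subgroupOf K) = 1 := by simpa using hcard
        have : Subsingleton (K ⧸ (frattini P).subgroupOf K) :=
          (Nat.card_eq_one_iff_unique.mp h1).1
        infer_instance
      · exact isCyclic_of_prime_card (by simpa using hcard)
    have hcK : ∀ x y : K, x * y = y * x := by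
      apply commutative_of_cyclic_center_quotient (QuotientGroup.mk' ((frattini P).subgroupOf K))
      rw [QuotientGroup.ker_mk']
      intro x hx
      rw [Subgroup.mem_center_iff]
      intro g
      ext
      exact Subgroup.mem_center_iff.mp (hfratZ hx) g
    exact Subtype.ext_iff.mp (hcK ⟨a, haK⟩ ⟨b, hbK⟩)
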